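/- If A is a totally unimodular matrix and b is an integral vector, then every extreme point (basic feasible solution) of the polyhedron {x : Ax = b, x ≥ 0} is integral. Consequently, a linear program min c'x over this polyhedron with a finite optimum has an integral optimal solution. -/

import Mathlib

open Matrix

section TUHelpers

variable {m n : ℕ}

/-- Columns of `A` on the support of `x` are linearly independent. -/
def ColIndep (A : Matrix (Fin m) (Fin n) ℝ) (x : Fin n → ℝ) : Prop :=
  LinearIndependent ℝ (fun j : {j : Fin n // x j ≠ 0} => fun i : Fin m => A i j.val)

lemma sum_subtype_support (x : Fin n → ℝ) (F : Fin n → ℝ)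
    (hF : ∀ j, x j = 0 → F j = 0) :
    ∑ j : {j : Fin n // x j ≠ 0}, F j.val = ∑ j, F j := by
  classical
  rw [← Finset.sum_filter_of_ne (p := fun j => x j ≠ 0) (s := Finset.univ) (f := F)
    (fun j _ hj h0 => hj (hF j h0))]
  exact (Finset.sum_subtype _ (by simp) F).symm

lemma exists_dir (A : Matrix (Fin m) (Fin n) ℝ) (x : Fin n → ℝ) (h : ¬ ColIndep A x) :
    ∃ d : Fin n → ℝ, d ≠ 0 ∧ A.mulVec d = 0 ∧ ∀ j, x j = 0 → d j = 0 := by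
  classical
  rw [ColIndep, Fintype.linearIndependent_iff] at h
  push_neg at h
  obtain ⟨g, hg0, j0, hj0⟩ := h
  refine ⟨fun j => if h : x j ≠ 0 then g ⟨j, h⟩ else 0, ?_, ?_, ?_⟩
  · intro hd
    exact hj0 (by simpa [j0.prop] using congrFun hd j0.val)
  · ext i
    have h1 := congrFun hg0 i
    simp only [Finset.sum_apply, Pi.smul_apply, smul_eq_mul, Pi.zero_apply] at h1
    have h2 := sum_subtype_support x
      (fun j' => A i j' * (if h : x j' ≠ 0 then g ⟨j', h⟩ else 0))
      (fun j hj => by simp [hj])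
    simp only [Matrix.mulVec, dotProduct, Pi.zero_apply]
    rw [← h2]
    exact Eq.trans (Finset.sum_congr rfl fun j _ => by simp [dif_pos j.prop, mul_comm]) h1
  · intro j hj; simp [hj]

lemma eq_of_colindep {A : Matrix (Fin m) (Fin n) ℝ} {x y : Fin n → ℝ}
    (hx : ColIndep A x) (hxy : A.mulVec x = A.mulVec y)
    (hsupp : ∀ j, x j = 0 → y j = 0) : x = y := by
  classical
  have key := (Fintype.linearIndependent_iff.mp hx) (fun j => x j.val - y j.val) ?_
  · funext j
    by_cases hj : x j ≠ 0
    · have := key ⟨j, hj⟩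
      simpa [sub_eq_zero] using this
    · push_neg at hj
      rw [hj, hsupp j hj]
  · funext i
    simp only [Finset.sum_apply, Pi.smul_apply, smul_eq_mul, Pi.zero_apply]
    have h2 := sum_subtype_support x (fun j' => (x j' - y j') * A i j')
      (fun j hj => by simp [hj, hsupp j hj])
    have h3 : ∑ j, (x j - y j) * A i j = 0 := by
      have hx1 := congrFun hxy i
      simp only [Matrix.mulVec, dotProduct] at hx1
      calc ∑ j, (x j - y j) * A i j
          = ∑ j, A i j * x j - ∑ j, A i j * y j := by
            rw [← Finset.sum_sub_distrib]; refine Finset.sum_congr rfl fun j _ => by ring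
        _ = 0 := by rw [hx1, sub_self]
    exact h2.trans h3

lemma bfs_integral (A : Matrix (Fin m) (Fin n) ℝ) (hA : A.IsTotallyUnimodular)
    (b : Fin m → ℝ) (hb : ∀ i, ∃ k : ℤ, b i = (k : ℝ))
    (x : Fin n → ℝ) (hx : A.mulVec x = b) (hind : ColIndep A x) :
    ∀ i, ∃ k : ℤ, x i = (k : ℝ) := by
  classical
  set s := {j : Fin n // x j ≠ 0} with hs
  set p := Fintype.card s with hp
  let e : Fin p ≃ s := (Fintype.equivFin s).symm
  let σ : Fin p → Fin n := fun k => (e k).val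
  have hσinj : Function.Injective σ :=
    fun k k' h => e.injective (Subtype.val_injective h)
  set M : Matrix (Fin m) (Fin p) ℝ := A.submatrix id σ with hM
  -- columns of M are linearly independent
  have hMcols : LinearIndependent ℝ (fun k : Fin p => fun i => M i k) := by
    have := hind.comp e e.injective
    exact this
  have hinj : Function.Injective M.mulVec := by
    rw [Matrix.mulVec_injective_iff]
    exact hMcols
  -- rank of M is p
  have hrank : M.rank = p := by
    have hinj' : Function.Injective M.mulVecLin := by
      exact hinj
    rw [Matrix.rank]
    rw [LinearMap.finrank_range_of_inj hinj']
    simp [Module.finrank_fin_fun]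
  have hrankT : Mᵀ.rank = p := by rw [Matrix.rank_transpose]; exact hrank
  -- rows of M span ℝ^p
  have hspan : Submodule.span ℝ (Set.range M) = ⊤ := by
    have h1 : LinearMap.range Mᵀ.mulVecLin = Submodule.span ℝ (Set.range M) := by
      rw [Matrix.range_mulVecLin]; rfl
    have h2 : Module.finrank ℝ (LinearMap.range Mᵀ.mulVecLin) = p := hrankT
    rw [h1] at h2
    exact Submodule.eq_top_of_finrank_eq (by rw [h2]; simp [Module.finrank_fin_fun])
  obtain ⟨t, hts, htspan, htind⟩ := exists_linearIndependent ℝ (Set.range M)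
  have htfin : t.Finite := htind.set_finite_of_isNoetherian
  haveI := htfin.fintype
  let bB : Module.Basis t ℝ (Fin p → ℝ) :=
    Module.Basis.mk htind (by rw [Subtype.range_coe, htspan, hspan])
  have hcard : Fintype.card t = p := by
    have := Module.finrank_eq_card_basis bB
    simp only [Module.finrank_fin_fun] at this
    omega
  let f : Fin p ≃ t := (Fintype.equivFinOfCardEq hcard).symm
  have hchoice : ∀ v : t, ∃ i : Fin m, M i = v.val := fun v => hts v.prop
  choose r hr using hchoice
  let g : Fin p → Fin m := fun k => r (f k)
  have hg : ∀ k, M (g k) = (f k).val := fun k => hr (f k)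
  have hginj : Function.Injective g := by
    intro k k' h
    apply f.injective
    apply Subtype.val_injective
    rw [← hg k, ← hg k', h]
  set B : Matrix (Fin p) (Fin p) ℝ := A.submatrix g σ with hB
  -- B is invertible
  have hBrows : LinearIndependent ℝ (fun k : Fin p => B k) := by
    have h1 : (fun k : Fin p => B k) = fun k => ((f k : t) : Fin p → ℝ) := by
      funext k
      have := hg k
      exact this
    rw [h1]
    exact htind.comp f f.injective
  have hBunit : IsUnit B := Matrix.linearIndependent_rows_iff_isUnit.mp hBrows
  have hBdet : IsUnit B.det := (Matrix.isUnit_iff_isUnit_det B).mp hBunit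
  -- integer lift of B
  have hBint : ∀ k l : Fin p, ∃ z : ℤ, (z : ℝ) = B k l := by
    intro k l
    obtain ⟨sg, hsg⟩ := hA.apply (g k) (σ l)
    exact ⟨sg, by rw [hB, Matrix.submatrix_apply, ← hsg]; cases sg <;> simp⟩
  choose B₀f hB₀ using hBint
  set B₀ : Matrix (Fin p) (Fin p) ℤ := Matrix.of B₀f with hB₀def
  have hmap : B₀.map (Int.cast : ℤ → ℝ) = B := by
    ext k l; exact hB₀ k l
  have hdetcast : ((B₀.det : ℤ) : ℝ) = B.det := by
    rw [← hmap]
    simpa [RingHom.mapMatrix_apply] using RingHom.map_det (Int.castRingHom ℝ) B₀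
  have hB₀det : IsUnit B₀.det := by
    obtain ⟨sg, hsg⟩ := hA p g σ hginj hσinj
    have hBsg : B.det = (sg : ℝ) := hsg.symm
    cases sg with
    | zero => exact absurd (by simpa using hBsg) hBdet.ne_zero
    | pos =>
        have : (B₀.det : ℝ) = ((1 : ℤ) : ℝ) := by rw [hdetcast, hBsg]; simp
        rw [Int.cast_injective this]; exact isUnit_one
    | neg =>
        have : (B₀.det : ℝ) = ((-1 : ℤ) : ℝ) := by rw [hdetcast, hBsg]; simp
        rw [Int.cast_injective this]
        exact Int.isUnit_iff.mpr (Or.inr rfl)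
  -- integer lift of b on the selected rows
  have hbg : ∀ k : Fin p, ∃ z : ℤ, (z : ℝ) = b (g k) := fun k => (hb (g k)).imp
    (fun z h => h.symm)
  choose b₀ hb₀' using hbg
  set z : Fin p → ℤ := B₀⁻¹.mulVec b₀ with hz
  have hB₀z : B₀.mulVec z = b₀ := by
    rw [hz, Matrix.mulVec_mulVec, Matrix.mul_nonsing_inv _ hB₀det, Matrix.one_mulVec]
  -- B *ᵥ (cast ∘ z) = b ∘ g
  have hclaim1 : B.mulVec (fun k => ((z k : ℤ) : ℝ)) = fun k => b (g k) := by
    funext k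
    have h1 : (B.mulVec (fun l => ((z l : ℤ) : ℝ))) k
        = ((∑ l, B₀ k l * z l : ℤ) : ℝ) := by
      simp only [Matrix.mulVec, dotProduct]
      push_cast
      refine Finset.sum_congr rfl fun l _ => ?_
      rw [← hB₀ k l]
      rfl
    have h2 : ∑ l, B₀ k l * z l = b₀ k := by
      have := congrFun hB₀z k
      simpa [Matrix.mulVec, dotProduct] using this
    rw [h1, h2, hb₀' k]
  -- B *ᵥ (x ∘ σ) = b ∘ g
  have hclaim2 : B.mulVec (fun k => x (σ k)) = fun k => b (g k) := by
    funext k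
    have hrow : ∑ j, A (g k) j * x j = b (g k) := by
      have := congrFun hx (g k)
      simpa [Matrix.mulVec, dotProduct] using this
    have hsub : ∑ j : s, A (g k) j.val * x j.val = ∑ j, A (g k) j * x j :=
      sum_subtype_support x (fun j => A (g k) j * x j) (fun j hj => by simp [hj])
    have hre : ∑ l : Fin p, A (g k) (σ l) * x (σ l)
        = ∑ j : s, A (g k) j.val * x j.val :=
      Fintype.sum_equiv e _ _ (fun l => rfl)
    simp only [Matrix.mulVec, dotProduct]
    calc ∑ l, B k l * x (σ l) = ∑ l, A (g k) (σ l) * x (σ l) := rfl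
      _ = b (g k) := by rw [hre, hsub, hrow]
  have hBinj : Function.Injective B.mulVec :=
    Matrix.mulVec_injective_iff_isUnit.mpr hBunit
  have hxz : (fun k => x (σ k)) = fun k => ((z k : ℤ) : ℝ) :=
    hBinj (by rw [hclaim1, hclaim2])
  intro i
  by_cases hxi : x i = 0
  · exact ⟨0, by simp [hxi]⟩
  · refine ⟨z (e.symm ⟨i, hxi⟩), ?_⟩
    have h1 := congrFun hxz (e.symm ⟨i, hxi⟩)
    have h2 : σ (e.symm ⟨i, hxi⟩) = i := by simp [σ]
    rw [h2] at h1
    exact h1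

lemma extreme_colindep (A : Matrix (Fin m) (Fin n) ℝ) (b : Fin m → ℝ)
    (x : Fin n → ℝ)
    (hx : x ∈ Set.extremePoints ℝ {x : Fin n → ℝ | A.mulVec x = b ∧ ∀ i, 0 ≤ x i}) :
    ColIndep A x := by
  classical
  by_contra h
  obtain ⟨d, hd0, hdA, hdsupp⟩ := exists_dir A x h
  obtain ⟨hxS, hxe⟩ := hx
  obtain ⟨hx1, hx2⟩ := hxS
  set T : Finset (Fin n) := Finset.univ.filter (fun j => d j ≠ 0) with hT
  have hTne : T.Nonempty := by
    obtain ⟨j, hj⟩ := Function.ne_iff.mp hd0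
    refine ⟨j, ?_⟩
    simp only [hT, Finset.mem_filter, Finset.mem_univ, true_and]
    simpa using hj
  set ε : ℝ := T.inf' hTne (fun j => x j / |d j|) with hε
  have hxpos : ∀ j ∈ T, 0 < x j := by
    intro j hj
    have hdj : d j ≠ 0 := by simpa [hT] using hj
    have hxj : x j ≠ 0 := fun h0 => hdj (hdsupp j h0)
    exact lt_of_le_of_ne (hx2 j) (Ne.symm hxj)
  have hεpos : 0 < ε := by
    rw [hε, Finset.lt_inf'_iff]
    intro j hj
    have hdj : d j ≠ 0 := by simpa [hT] using hj
    exact div_pos (hxpos j hj) (abs_pos.mpr hdj)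
  have hbound : ∀ j, ε * |d j| ≤ x j ∨ d j = 0 := by
    intro j
    by_cases hdj : d j = 0
    · exact Or.inr hdj
    · left
      have hjT : j ∈ T := by simp [hT, hdj]
      have h1 : ε ≤ x j / |d j| := Finset.inf'_le _ hjT
      rwa [le_div_iff₀ (abs_pos.mpr hdj)] at h1
  have hnn : ∀ (σ : ℝ), σ = 1 ∨ σ = -1 → ∀ i, 0 ≤ (x + (σ * ε) • d) i := by
    intro σ hσ i
    simp only [Pi.add_apply, Pi.smul_apply, smul_eq_mul]
    rcases hbound i with hbi | hbi
    · have hla := le_abs_self (d i)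
      have hnla := neg_abs_le (d i)
      have h1 : -(ε * |d i|) ≤ σ * (ε * d i) := by
        rcases hσ with h | h <;> subst h <;> nlinarith
      have h2 : σ * ε * d i = σ * (ε * d i) := by ring
      linarith
    · simp [hbi, hx2 i]
  have hmem : ∀ (σ : ℝ), σ = 1 ∨ σ = -1 →
      (x + (σ * ε) • d) ∈ {x : Fin n → ℝ | A.mulVec x = b ∧ ∀ i, 0 ≤ x i} := by
    intro σ hσ
    refine ⟨?_, hnn σ hσ⟩
    rw [Matrix.mulVec_add, Matrix.mulVec_smul, hdA, hx1]
    simp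
  have hseg : x ∈ openSegment ℝ (x + (1 * ε) • d) (x + ((-1) * ε) • d) := by
    refine ⟨1/2, 1/2, by norm_num, by norm_num, by norm_num, ?_⟩
    module
  have := (hxe (hmem 1 (Or.inl rfl)) (hmem (-1) (Or.inr rfl)) hseg)
  have hεd : (1 * ε) • d = 0 := by
    have h2 : x + (1 * ε) • d = x + 0 := by rw [add_zero]; exact this
    exact add_left_cancel h2
  rw [smul_eq_zero] at hεd
  rcases hεd with h | h
  · simp at h; exact absurd h (ne_of_gt hεpos)
  · exact hd0 h

lemma exists_bfs (A : Matrix (Fin m) (Fin n) ℝ) (b : Fin m → ℝ) (c : Fin n → ℝ)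
    (hbdd : BddBelow ((fun x => c ⬝ᵥ x) '' {x : Fin n → ℝ | A.mulVec x = b ∧ ∀ i, 0 ≤ x i})) :
    ∀ y, A.mulVec y = b → (∀ i, 0 ≤ y i) →
      ∃ x, (A.mulVec x = b ∧ ∀ i, 0 ≤ x i) ∧ ColIndep A x ∧ c ⬝ᵥ x ≤ c ⬝ᵥ y := by
  classical
  suffices H : ∀ N : ℕ, ∀ y, A.mulVec y = b → (∀ i, 0 ≤ y i) →
      (Finset.univ.filter fun j => y j ≠ 0).card ≤ N →
      ∃ x, (A.mulVec x = b ∧ ∀ i, 0 ≤ x i) ∧ ColIndep A x ∧ c ⬝ᵥ x ≤ c ⬝ᵥ y by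
    exact fun y h1 h2 => H _ y h1 h2 le_rfl
  intro N
  induction N with
  | zero =>
      intro y hy1 hy2 hcard
      refine ⟨y, ⟨hy1, hy2⟩, ?_, le_rfl⟩
      have hempty : IsEmpty {j : Fin n // y j ≠ 0} := by
        constructor
        intro j
        have : (Finset.univ.filter fun j => y j ≠ 0) = ∅ :=
          Finset.card_eq_zero.mp (Nat.le_zero.mp hcard)
        have hj : j.val ∈ (Finset.univ.filter fun j => y j ≠ 0) := by
          simp [j.prop]
        rw [this] at hj
        exact absurd hj (Finset.notMem_empty _)
      exact linearIndependent_empty_type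
  | succ N ih =>
      intro y hy1 hy2 hcard
      by_cases hci : ColIndep A y
      · exact ⟨y, ⟨hy1, hy2⟩, hci, le_rfl⟩
      obtain ⟨d₀, hd0, hdA₀, hdsupp₀⟩ := exists_dir A y hci
      -- normalize the direction
      obtain ⟨d, hdA, hdsupp, hcd, halt⟩ :
          ∃ d : Fin n → ℝ, A.mulVec d = 0 ∧ (∀ j, y j = 0 → d j = 0) ∧
            c ⬝ᵥ d ≤ 0 ∧ ((∃ j, d j < 0) ∨ c ⬝ᵥ d < 0) := by
        have hdAneg : A.mulVec (-d₀) = 0 := by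
          rw [Matrix.mulVec_neg, hdA₀, neg_zero]
        have hdsuppneg : ∀ j, y j = 0 → (-d₀) j = 0 := fun j hj => by
          simp [hdsupp₀ j hj]
        rcases lt_trichotomy (c ⬝ᵥ d₀) 0 with hlt | heq | hgt
        · exact ⟨d₀, hdA₀, hdsupp₀, hlt.le, Or.inr hlt⟩
        · obtain ⟨j, hj⟩ := Function.ne_iff.mp hd0
          have hj' : d₀ j ≠ 0 := by simpa using hj
          rcases lt_or_gt_of_ne hj' with hneg | hpos
          · exact ⟨d₀, hdA₀, hdsupp₀, heq.le, Or.inl ⟨j, hneg⟩⟩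
          · refine ⟨-d₀, hdAneg, hdsuppneg, ?_, Or.inl ⟨j, by simpa using hpos⟩⟩
            rw [dotProduct_neg, heq, neg_zero]
        · refine ⟨-d₀, hdAneg, hdsuppneg, ?_, Or.inr ?_⟩ <;>
            rw [dotProduct_neg] <;> linarith
      rcases em (∃ j, d j < 0) with hneg | hnoneg
      · -- can decrease support
        obtain ⟨j₁, hj₁⟩ := hneg
        set T : Finset (Fin n) := Finset.univ.filter (fun j => d j < 0) with hTdef
        have hTne : T.Nonempty := ⟨j₁, by simp [hTdef, hj₁]⟩
        obtain ⟨j₀, hj₀T, hj₀min⟩ := T.exists_min_image (fun j => y j / (-d j)) hTne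
        have hd0j₀ : d j₀ < 0 := by simpa [hTdef] using hj₀T
        set t : ℝ := y j₀ / (-d j₀) with htdef
        have ht0 : 0 ≤ t := div_nonneg (hy2 j₀) (by linarith)
        set y' : Fin n → ℝ := y + t • d with hy'def
        have hy'1 : A.mulVec y' = b := by
          rw [hy'def, Matrix.mulVec_add, Matrix.mulVec_smul, hdA, smul_zero, add_zero, hy1]
        have hy'2 : ∀ i, 0 ≤ y' i := by
          intro j
          simp only [hy'def, Pi.add_apply, Pi.smul_apply, smul_eq_mul]
          rcases le_or_gt 0 (d j) with hdj | hdj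
          · exact add_nonneg (hy2 j) (mul_nonneg ht0 hdj)
          · have hjT : j ∈ T := by simp [hTdef, hdj]
            have h1 : t ≤ y j / (-d j) := hj₀min j hjT
            rw [le_div_iff₀ (by linarith)] at h1
            linarith
        have hj₀0 : y' j₀ = 0 := by
          simp only [hy'def, Pi.add_apply, Pi.smul_apply, smul_eq_mul, htdef]
          have hne : -d j₀ ≠ 0 := by linarith
          field_simp
          rw [div_self (by linarith : d j₀ ≠ 0)]; ring
        have hsubs : ∀ j, y j = 0 → y' j = 0 := by
          intro j hj
          simp [hy'def, hj, hdsupp j hj]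
        have hyj₀ : y j₀ ≠ 0 := fun h0 => absurd (hdsupp j₀ h0) (ne_of_lt hd0j₀)
        have hy'card : (Finset.univ.filter fun j => y' j ≠ 0).card ≤ N := by
          have hsub : (Finset.univ.filter fun j => y' j ≠ 0) ⊆
              (Finset.univ.filter fun j => y j ≠ 0).erase j₀ := by
            intro j hj
            simp only [Finset.mem_filter, Finset.mem_univ, true_and] at hj
            rw [Finset.mem_erase]
            constructor
            · rintro rfl; exact hj hj₀0
            · simp only [Finset.mem_filter, Finset.mem_univ, true_and]
              intro h0; exact hj (hsubs j h0)
          have hmem : j₀ ∈ (Finset.univ.filter fun j => y j ≠ 0) := by simp [hyj₀]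
          have := Finset.card_le_card hsub
          rw [Finset.card_erase_of_mem hmem] at this
          omega
        obtain ⟨x, hx1, hx2, hx3⟩ := ih y' hy'1 hy'2 hy'card
        refine ⟨x, hx1, hx2, ?_⟩
        have hcy' : c ⬝ᵥ y' = c ⬝ᵥ y + t * (c ⬝ᵥ d) := by
          rw [hy'def, dotProduct_add, dotProduct_smul, smul_eq_mul]
        have : t * (c ⬝ᵥ d) ≤ 0 := mul_nonpos_of_nonneg_of_nonpos ht0 hcd
        linarith [hx3, hcy' ▸ hx3]
      · -- unbounded direction: contradiction with BddBelow
        exfalso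
        push_neg at hnoneg
        have hcdlt : c ⬝ᵥ d < 0 := halt.resolve_left (by push_neg; exact hnoneg)
        obtain ⟨L, hL⟩ := hbdd
        have hfeas : ∀ t : ℝ, 0 ≤ t → L ≤ c ⬝ᵥ y + t * (c ⬝ᵥ d) := by
          intro t ht
          have hmem : (y + t • d) ∈ {x : Fin n → ℝ | A.mulVec x = b ∧ ∀ i, 0 ≤ x i} := by
            refine ⟨by rw [Matrix.mulVec_add, Matrix.mulVec_smul, hdA, smul_zero, add_zero, hy1],
              fun j => ?_⟩
            simp only [Pi.add_apply, Pi.smul_apply, smul_eq_mul]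
            exact add_nonneg (hy2 j) (mul_nonneg ht (hnoneg j))
          have h' : L ≤ c ⬝ᵥ (y + t • d) := hL ⟨y + t • d, hmem, rfl⟩
          rwa [dotProduct_add, dotProduct_smul, smul_eq_mul] at h'
        set t : ℝ := (c ⬝ᵥ y - L + 1) / (-(c ⬝ᵥ d)) with htdef
        have h1 : L ≤ c ⬝ᵥ y := by simpa using hfeas 0 le_rfl
        have ht0 : 0 ≤ t := div_nonneg (by linarith) (by linarith)
        have h2 := hfeas t ht0
        have hcdne : -(c ⬝ᵥ d) ≠ 0 := by linarith
        have h3 : t * (c ⬝ᵥ d) = -(c ⬝ᵥ y - L + 1) := by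
          rw [htdef, div_mul_eq_mul_div, div_eq_iff hcdne]
          ring
        linarith

end TUHelpers

/-- If `A` is totally unimodular and `b` is integral, then every
extreme point of the polyhedron `{x : Ax = b, x ≥ 0}` is integral; consequently,
any linear program `min c'x` over this polyhedron that is feasible and bounded
below has an integral optimal solution. -/
theorem tu_polyhedron_integral_extreme_points {m n : ℕ}
    (A : Matrix (Fin m) (Fin n) ℝ) (hA : A.IsTotallyUnimodular)
    (b : Fin m → ℝ) (hb : ∀ i, ∃ k : ℤ, b i = (k : ℝ)) :
    (∀ x ∈ Set.extremePoints ℝ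
        {x : Fin n → ℝ | A.mulVec x = b ∧ ∀ i, 0 ≤ x i},
      ∀ i, ∃ k : ℤ, x i = (k : ℝ)) ∧
    (∀ c : Fin n → ℝ,
      ({x : Fin n → ℝ | A.mulVec x = b ∧ ∀ i, 0 ≤ x i}).Nonempty →
      BddBelow ((fun x => c ⬝ᵥ x) '' {x : Fin n → ℝ | A.mulVec x = b ∧ ∀ i, 0 ≤ x i}) →
      ∃ x, (A.mulVec x = b ∧ ∀ i, 0 ≤ x i) ∧ (∀ i, ∃ k : ℤ, x i = (k : ℝ)) ∧
        ∀ y, A.mulVec y = b → (∀ i, 0 ≤ y i) → c ⬝ᵥ x ≤ c ⬝ᵥ y) := by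
  classical
  constructor
  · intro x hx i
    exact bfs_integral A hA b hb x hx.1.1 (extreme_colindep A b x hx) i
  · intro c hne hbdd
    set S : Set (Fin n → ℝ) :=
      {x | (A.mulVec x = b ∧ ∀ i, 0 ≤ x i) ∧ ColIndep A x} with hSdef
    have hSne : S.Nonempty := by
      obtain ⟨y, hy1, hy2⟩ := hne
      obtain ⟨x, hx1, hx2, _⟩ := exists_bfs A b c hbdd y hy1 hy2
      exact ⟨x, hx1, hx2⟩
    have hinj : Set.InjOn (fun x : Fin n → ℝ =>
        Finset.univ.filter fun j => x j ≠ 0) S := by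
      intro x hx y hy hxy
      refine eq_of_colindep hx.2 ?_ ?_
      · rw [hx.1.1, hy.1.1]
      · intro j hj
        by_contra hyj
        have hxy' : (Finset.univ.filter fun j => x j ≠ 0)
            = (Finset.univ.filter fun j => y j ≠ 0) := hxy
        have hjy : j ∈ Finset.univ.filter fun j => y j ≠ 0 := by simp [hyj]
        rw [← hxy'] at hjy
        simp only [Finset.mem_filter, Finset.mem_univ, true_and] at hjy
        exact hjy hj
    have hSfin : S.Finite := by
      have himg : ((fun x : Fin n → ℝ =>
          Finset.univ.filter fun j => x j ≠ 0) '' S).Finite := Set.toFinite _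
      exact Set.Finite.of_finite_image himg hinj
    obtain ⟨xs, hxsS, hmin⟩ := Set.exists_min_image S (fun x => c ⬝ᵥ x) hSfin hSne
    refine ⟨xs, hxsS.1, bfs_integral A hA b hb xs hxsS.1.1 hxsS.2, ?_⟩
    intro y hy1 hy2
    obtain ⟨z, hz1, hz2, hz3⟩ := exists_bfs A b c hbdd y hy1 hy2
    exact le_trans (hmin z ⟨hz1, hz2⟩) hz3
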